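/- arXiv:1309.3806 — 3 statements merged into one kernel-verified Lean document; each statement's English description precedes it below -/
import Mathlib

section
/- Let p be a prime, let Γ be a finitely generated group, and let H be a normal subgroup of Γ of p-power index. Then d_p(H) − 1 ≤ (d_p(Γ) − 1)·[Γ : H]. -/
/-- `grank G` is `d(G)`, the minimal number of generators of `G`. -/
noncomputable def grank (G : Type*) [Group G] : ℕ :=
  sInf {n | ∃ s : Finset G, s.card = n ∧ Subgroup.closure (s : Set G) = ⊤}

open scoped commutatorElement

/-- The subgroup `[G,G]Gᵖ` of `G`, generated (as a normal subgroup; it is in fact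
verbal, hence normal) by all commutators and all `p`-th powers. -/
def commPPow (p : ℕ) (G : Type*) [Group G] : Subgroup G :=
  Subgroup.normalClosure {x | (∃ a b : G, x = ⁅a, b⁆) ∨ ∃ a : G, x = a ^ p}

instance (p : ℕ) (G : Type*) [Group G] : (commPPow p G).Normal :=
  Subgroup.normalClosure_normal

/-- `dp p G = d_p(G) = d(G/[G,G]Gᵖ)`. -/
noncomputable def dp (p : ℕ) (G : Type*) [Group G] : ℕ :=
  grank (G ⧸ commPPow p G)

/-- The absolute `p`-gradient `RG_p(G) = inf (d_p(H) - 1)/[G : H]` over all normal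
subgroups `H` of `G` of `p`-power index. -/
noncomputable def pGradient (p : ℕ) (G : Type*) [Group G] : ℝ :=
  sInf {x | ∃ H : Subgroup G, H.Normal ∧ (∃ k : ℕ, H.index = p ^ k) ∧
    x = ((dp p H : ℝ) - 1) / (H.index : ℝ)}

open Subgroup

section basic
variable {p : ℕ}

lemma grank_eq_rank (G : Type*) [Group G] [Group.FG G] : grank G = Group.rank G := by
  obtain ⟨S, h1, h2⟩ := Group.rank_spec G
  have hne : {n | ∃ s : Finset G, s.card = n ∧ Subgroup.closure (s : Set G) = ⊤}.Nonempty :=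
    ⟨Group.rank G, S, h1, h2⟩
  have hmem : Group.rank G ∈ {n | ∃ s : Finset G, s.card = n ∧ Subgroup.closure (s : Set G) = ⊤} :=
    ⟨S, h1, h2⟩
  apply le_antisymm (Nat.sInf_le hmem)
  obtain ⟨T, hT1, hT2⟩ := Nat.sInf_mem hne
  exact hT1 ▸ Group.rank_le hT2

lemma commPPow_le_comap {G K : Type*} [Group G] [Group K] (f : G →* K) :
    commPPow p G ≤ (commPPow p K).comap f := by
  haveI : ((commPPow p K).comap f).Normal := Subgroup.Normal.comap inferInstance f
  apply normalClosure_le_normal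
  rintro x (⟨a, b, rfl⟩ | ⟨a, rfl⟩)
  · show f ⁅a, b⁆ ∈ commPPow p K
    rw [map_commutatorElement]
    exact subset_normalClosure (Or.inl ⟨_, _, rfl⟩)
  · show f (a ^ p) ∈ commPPow p K
    rw [map_pow]
    exact subset_normalClosure (Or.inr ⟨_, rfl⟩)

lemma commPPow_map_le {G K : Type*} [Group G] [Group K] (f : G →* K) :
    (commPPow p G).map f ≤ commPPow p K :=
  map_le_iff_le_comap.mpr (commPPow_le_comap f)

instance fg_quot_commPPow (G : Type*) [Group G] [Group.FG G] :
    Group.FG (G ⧸ commPPow p G) :=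
  Group.fg_of_surjective (QuotientGroup.mk'_surjective (commPPow p G))

lemma dp_eq_rank (G : Type*) [Group G] [Group.FG G] :
    dp p G = Group.rank (G ⧸ commPPow p G) :=
  grank_eq_rank _

lemma dp_le_of_surjective {G K : Type*} [Group G] [Group K] [Group.FG G]
    (f : G →* K) (hf : Function.Surjective f) : dp p K ≤ dp p G := by
  haveI : Group.FG K := Group.fg_of_surjective hf
  rw [dp_eq_rank, dp_eq_rank]
  refine Group.rank_le_of_surjective
    (QuotientGroup.map (commPPow p G) (commPPow p K) f (commPPow_le_comap f)) ?_
  intro y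
  obtain ⟨k, rfl⟩ := QuotientGroup.mk'_surjective (commPPow p K) y
  obtain ⟨g, rfl⟩ := hf k
  exact ⟨QuotientGroup.mk g, QuotientGroup.map_mk' _ _ _ _ _⟩

lemma dp_congr {G K : Type*} [Group G] [Group K] [Group.FG G] (e : G ≃* K) :
    dp p G = dp p K := by
  haveI : Group.FG K := Group.fg_of_surjective (f := e.toMonoidHom) e.surjective
  exact le_antisymm (dp_le_of_surjective e.symm.toMonoidHom e.symm.surjective)
    (dp_le_of_surjective e.toMonoidHom e.surjective)

lemma quot_commPPow_comm (G : Type*) [Group G] (a b : G ⧸ commPPow p G) :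
    Commute a b := by
  obtain ⟨x, rfl⟩ := QuotientGroup.mk'_surjective (commPPow p G) a
  obtain ⟨y, rfl⟩ := QuotientGroup.mk'_surjective (commPPow p G) b
  rw [← commutatorElement_eq_one_iff_commute, ← map_commutatorElement,
    QuotientGroup.mk'_apply, QuotientGroup.eq_one_iff]
  exact subset_normalClosure (Or.inl ⟨x, y, rfl⟩)

lemma quot_commPPow_pow (G : Type*) [Group G] (a : G ⧸ commPPow p G) :
    a ^ p = 1 := by
  obtain ⟨x, rfl⟩ := QuotientGroup.mk'_surjective (commPPow p G) a
  rw [← map_pow, QuotientGroup.mk'_apply, QuotientGroup.eq_one_iff]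
  exact subset_normalClosure (Or.inr ⟨x, rfl⟩)

lemma finite_of_fg_comm_expp {G : Type*} [Group G] [Group.FG G] (hp : p ≠ 0)
    (hc : ∀ a b : G, Commute a b) (he : ∀ a : G, a ^ p = 1) : Finite G := by
  letI cg : CommGroup G := { toGroup := ‹_›, mul_comm := fun a b => (hc a b).eq }
  exact CommGroup.finite_of_fg_torsion (G := G)
    (fun g => isOfFinOrder_iff_pow_eq_one.mpr ⟨p, Nat.pos_of_ne_zero hp, he g⟩)

lemma finite_quot_commPPow (G : Type*) [Group G] [Group.FG G] (hp : p ≠ 0) :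
    Finite (G ⧸ commPPow p G) :=
  finite_of_fg_comm_expp hp (quot_commPPow_comm G) (quot_commPPow_pow G)

end basic

section schreier
open Subgroup
open scoped Pointwise
variable {p : ℕ}

lemma closure_erase_one {G : Type*} [Group G] [DecidableEq G] (T : Finset G) :
    Subgroup.closure (↑(T.erase 1) : Set G) = Subgroup.closure (T : Set G) := by
  apply le_antisymm (Subgroup.closure_mono (by exact_mod_cast Finset.erase_subset _ _))
  rw [closure_le]
  intro x hx
  rcases eq_or_ne x 1 with rfl | h
  · exact one_mem _
  · exact subset_closure (by exact_mod_cast Finset.mem_erase.mpr ⟨h, by exact_mod_cast hx⟩)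

theorem sharp_schreier {G : Type*} [Group G] [Group.FG G] (hp : p.Prime)
    (H : Subgroup G) [hnorm : H.Normal] [H.FiniteIndex] (hidx : H.index = p) :
    (Group.rank H : ℤ) - 1 ≤ p * ((Group.rank G : ℤ) - 1) := by
  classical
  obtain ⟨S, hScard, hSgen⟩ := Group.rank_spec G
  haveI : Finite (G ⧸ H) :=
    Nat.finite_of_card_ne_zero (by rw [← Subgroup.index_eq_card, hidx]; exact hp.ne_zero)
  -- a generator not in H
  have hHneTop : H ≠ ⊤ := fun h => by
    rw [h, Subgroup.index_top] at hidx; exact hp.one_lt.ne hidx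
  obtain ⟨g₀, hg₀S, hg₀H⟩ : ∃ g₀ ∈ S, g₀ ∉ H := by
    by_contra hcon
    push_neg at hcon
    exact hHneTop (top_le_iff.mp (hSgen ▸ (closure_le H).mpr hcon))
  have hcardQ : Nat.card (G ⧸ H) = p := by rw [← Subgroup.index_eq_card, hidx]
  set q : G ⧸ H := QuotientGroup.mk g₀ with hq
  have hq1 : q ≠ 1 := by
    simpa [hq, QuotientGroup.eq_one_iff] using hg₀H
  have horder : orderOf q = p := by
    rcases (Nat.Prime.eq_one_or_self_of_dvd hp _ (hcardQ ▸ orderOf_dvd_natCard q)) with h | h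
    · exact absurd (orderOf_eq_one_iff.mp h) hq1
    · exact h
  -- mk of powers
  have hmkpow : ∀ i : ℕ, (QuotientGroup.mk (g₀ ^ i) : G ⧸ H) = q ^ i := fun i => by
    rw [hq]; exact map_pow (QuotientGroup.mk' H) g₀ i
  -- the transversal
  set R : Finset G := (Finset.range p).image (g₀ ^ ·) with hRdef
  have hmemR : ∀ x ∈ R, ∃ i < p, g₀ ^ i = x := fun x hx => by
    obtain ⟨i, hi, rfl⟩ := Finset.mem_image.mp hx
    exact ⟨i, Finset.mem_range.mp hi, rfl⟩
  have hpowR : ∀ i < p, g₀ ^ i ∈ R := fun i hi =>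
    Finset.mem_image.mpr ⟨i, Finset.mem_range.mpr hi, rfl⟩
  have hR1 : (1 : G) ∈ R := by simpa using hpowR 0 hp.pos
  -- membership criterion
  have hkey : ∀ (x : G) (i : ℕ), x * (g₀ ^ i)⁻¹ ∈ H ↔ (QuotientGroup.mk x : G ⧸ H) = q ^ i := by
    intro x i
    rw [hnorm.mem_comm_iff, ← hmkpow, eq_comm]
    exact (QuotientGroup.eq (s := H)).symm
  -- R is a right transversal
  have hR : IsComplement (H : Set G) (↑R : Set G) := by
    rw [isComplement_iff_existsUnique_mul_inv_mem]
    intro g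
    obtain ⟨n, hn⟩ : ∃ n : ℕ, (QuotientGroup.mk g : G ⧸ H) = q ^ n := by
      have hmem : (QuotientGroup.mk g : G ⧸ H) ∈ zpowers q := by
        have hzt : zpowers q = ⊤ := by
          apply Subgroup.eq_top_of_card_eq
          rw [Nat.card_zpowers, horder, hcardQ]
        rw [hzt]; exact mem_top _
      obtain ⟨m, hm⟩ := hmem
      refine ⟨(m % (p : ℤ)).toNat, ?_⟩
      rw [← hm, ← zpow_natCast,
        Int.toNat_of_nonneg (Int.emod_nonneg m (by exact_mod_cast hp.ne_zero)),
        ← horder, zpow_mod_orderOf]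
    have hilt : n % p < p := Nat.mod_lt n hp.pos
    have hqi : (QuotientGroup.mk g : G ⧸ H) = q ^ (n % p) := by
      rw [hn, ← horder, pow_mod_orderOf]
    refine ⟨⟨g₀ ^ (n % p), by exact_mod_cast hpowR _ hilt⟩, (hkey g _).mpr hqi, ?_⟩
    rintro ⟨y, hy⟩ hmem
    obtain ⟨j, hj, rfl⟩ := hmemR y (by exact_mod_cast hy)
    have heq : q ^ j = q ^ (n % p) := by rw [← (hkey g j).mp hmem, hqi]
    have hji : j = n % p := by
      have h2 := (pow_eq_pow_iff_modEq (x := q)).mp heq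
      rw [horder] at h2
      calc j = j % p := (Nat.mod_eq_of_lt hj).symm
        _ = (n % p) % p := h2
        _ = n % p := Nat.mod_eq_of_lt hilt
    subst hji; rfl
  -- toFun fixes elements of R
  have htoFun : ∀ x ∈ R, (IsComplement.toRightFun hR x : G) = x := by
    intro x hx
    have := (isComplement_iff_existsUnique_mul_inv_mem.mp hR x).unique
      (IsComplement.mul_inv_toRightFun_mem hR x)
      (show x * ((⟨x, by exact_mod_cast hx⟩ : (↑R : Set G)) : G)⁻¹ ∈ H by
        simpa using H.one_mem)
    exact congrArg Subtype.val this
  have hg₀p : g₀ ^ p ∈ H := by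
    have h0 := (hkey (g₀ ^ p) 0).mpr ?_
    · simpa using h0
    · rw [hmkpow, ← horder, pow_orderOf_eq_one, pow_zero]
  have htoFunP : (IsComplement.toRightFun hR (g₀ ^ p) : G) = 1 := by
    have := (isComplement_iff_existsUnique_mul_inv_mem.mp hR (g₀ ^ p)).unique
      (IsComplement.mul_inv_toRightFun_mem hR (g₀ ^ p))
      (show (g₀ ^ p) * ((⟨1, by exact_mod_cast hR1⟩ : (↑R : Set G)) : G)⁻¹ ∈ H by
        simpa using hg₀p)
    exact congrArg Subtype.val this
  -- the generating set
  have hTgen := closure_mul_image_eq_top' (H := H) hR hR1 hSgen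
  set T : Finset ↥H := ((R * S).image fun g =>
    ⟨g * (IsComplement.toRightFun hR g : G)⁻¹,
      IsComplement.mul_inv_toRightFun_mem hR g⟩) with hTdef
  set T₁ : Finset ↥H := ((R * (S.erase g₀)).image fun g =>
    ⟨g * (IsComplement.toRightFun hR g : G)⁻¹,
      IsComplement.mul_inv_toRightFun_mem hR g⟩) with hT₁def
  have hsub : T.erase 1 ⊆ T₁ ∪ {⟨g₀ ^ p, hg₀p⟩} := by
    intro y hy
    obtain ⟨hy1, hyT⟩ := Finset.mem_erase.mp hy
    rw [hTdef] at hyT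
    obtain ⟨x, hx, rfl⟩ := Finset.mem_image.mp hyT
    obtain ⟨r, hr, s, hs, rfl⟩ := Finset.mem_mul.mp hx
    by_cases hsg : g₀ = s
    · subst hsg
      obtain ⟨i, hi, rfl⟩ := hmemR r hr
      rcases Nat.lt_or_ge (i + 1) p with h1 | h1
      · exfalso
        apply hy1
        have hmem : g₀ ^ i * g₀ ∈ R := by rw [← pow_succ]; exact hpowR _ h1
        apply Subtype.ext
        show (g₀ ^ i * g₀) * (IsComplement.toRightFun hR (g₀ ^ i * g₀) : G)⁻¹ = ((1 : ↥H) : G)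
        rw [htoFun _ hmem]
        group
        rfl
      · have hip : i + 1 = p := le_antisymm (by omega) h1
        apply Finset.mem_union_right
        apply Finset.mem_singleton.mpr
        apply Subtype.ext
        show (g₀ ^ i * g₀) * (IsComplement.toRightFun hR (g₀ ^ i * g₀) : G)⁻¹ = g₀ ^ p
        rw [show g₀ ^ i * g₀ = g₀ ^ p by rw [← pow_succ, hip], htoFunP, inv_one, mul_one]
    · apply Finset.mem_union_left
      rw [hT₁def]
      exact Finset.mem_image.mpr ⟨r * s,
        Finset.mem_mul.mpr ⟨r, hr, s, Finset.mem_erase.mpr ⟨fun h => hsg h.symm, hs⟩, rfl⟩, rfl⟩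
  have hcardR : R.card ≤ p := by
    rw [hRdef]
    exact Finset.card_image_le.trans (by simp)
  have hcard1 : T₁.card ≤ p * (Group.rank G - 1) := by
    calc T₁.card ≤ (R * (S.erase g₀)).card := Finset.card_image_le
      _ ≤ R.card * (S.erase g₀).card := Finset.card_mul_le
      _ ≤ p * (Group.rank G - 1) := by
          apply Nat.mul_le_mul hcardR
          rw [Finset.card_erase_of_mem hg₀S, hScard]
  have hrank : Group.rank ↥H ≤ p * (Group.rank G - 1) + 1 := by
    have hgen2 : closure (↑(T.erase 1) : Set ↥H) = ⊤ := by
      rw [closure_erase_one]; exact hTgen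
    calc Group.rank ↥H ≤ (T.erase 1).card := Group.rank_le hgen2
      _ ≤ (T₁ ∪ {⟨g₀ ^ p, hg₀p⟩}).card := Finset.card_le_card hsub
      _ ≤ T₁.card + 1 := (Finset.card_union_le _ _).trans (by simp)
      _ ≤ p * (Group.rank G - 1) + 1 := by omega
  have hd : 1 ≤ Group.rank G := hScard ▸ Finset.card_pos.mpr ⟨g₀, hg₀S⟩
  have hc := (Nat.cast_le (α := ℤ)).mpr hrank
  push_cast [Nat.cast_sub hd] at hc
  linarith

end schreier

section burnside
open Subgroup
variable {p : ℕ}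

instance finiteSubgroup {Q : Type*} [Group Q] [Finite Q] : Finite (Subgroup Q) :=
  Finite.of_injective (fun H => (H : Set Q)) SetLike.coe_injective

theorem coatom_p (hp : p.Prime) {Q : Type*} [Group Q] [Finite Q] (hQ : IsPGroup p Q)
    {M : Subgroup Q} (hM : IsCoatom M) :
    M.Normal ∧ M.index = p ∧ commPPow p Q ≤ M := by
  haveI : Fact p.Prime := ⟨hp⟩
  have hnorm : M.Normal :=
    Subgroup.NormalizerCondition.normal_of_coatom M
      (@normalizerCondition_of_isNilpotent _ _ hQ.isNilpotent) hM
  haveI := hnorm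
  obtain ⟨x, hx⟩ : ∃ x : Q, x ∉ M := by
    by_contra hcon
    push_neg at hcon
    exact hM.1 ((Subgroup.eq_top_iff' M).mpr hcon)
  have hx1 : (QuotientGroup.mk x : Q ⧸ M) ≠ 1 := by
    rwa [Ne, QuotientGroup.eq_one_iff]
  -- the order of mk x is a positive power of p
  have hQm : IsPGroup p (Q ⧸ M) := hQ.to_quotient M
  obtain ⟨n, hn⟩ := hQm (QuotientGroup.mk x)
  obtain ⟨j, hjn, hj⟩ := (Nat.dvd_prime_pow hp).mp (orderOf_dvd_of_pow_eq_one hn)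
  have hj1 : j ≠ 0 := by
    intro h
    rw [h, pow_zero] at hj
    exact hx1 (orderOf_eq_one_iff.mp hj)
  -- an element of order p
  set y : Q ⧸ M := (QuotientGroup.mk x) ^ (p ^ (j - 1)) with hy
  have hyp : y ^ p = 1 := by
    rw [hy, ← pow_mul, ← pow_succ, Nat.sub_add_cancel (Nat.one_le_iff_ne_zero.mpr hj1),
      ← hj, pow_orderOf_eq_one]
  have hy1 : y ≠ 1 := by
    intro h
    have := orderOf_dvd_of_pow_eq_one (n := p ^ (j - 1)) (by rw [← hy, h])
    rw [hj] at this
    exact absurd (Nat.pow_dvd_pow_iff_le_right hp.one_lt |>.mp this) (by omega)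
  have horder : orderOf y = p := by
    rcases (Nat.Prime.eq_one_or_self_of_dvd hp _ (orderOf_dvd_of_pow_eq_one hyp)) with h | h
    · exact absurd (orderOf_eq_one_iff.mp h) hy1
    · exact h
  -- zpowers y is everything
  have hzt : ∀ w : Q ⧸ M, w ∈ zpowers y := by
    set K := (zpowers y).comap (QuotientGroup.mk' M) with hK
    have hMK : M < K := by
      constructor
      · intro z hz
        show QuotientGroup.mk' M z ∈ zpowers y
        rw [QuotientGroup.mk'_apply, (QuotientGroup.eq_one_iff z).mpr hz]
        exact one_mem _
      · intro hle
        obtain ⟨z, hz⟩ := QuotientGroup.mk'_surjective M y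
        have hzK : z ∈ K := by
          show QuotientGroup.mk' M z ∈ zpowers y
          rw [hz]; exact mem_zpowers y
        have : z ∈ M := hle hzK
        rw [← hz, QuotientGroup.mk'_apply, (QuotientGroup.eq_one_iff z).mpr this] at hy1
        exact hy1 rfl
    have hKtop : K = ⊤ := hM.2 K hMK
    intro w
    obtain ⟨z, rfl⟩ := QuotientGroup.mk'_surjective M w
    have : z ∈ K := hKtop ▸ mem_top z
    exact this
  have hcomm : ∀ a b : Q ⧸ M, Commute a b := by
    intro a b
    obtain ⟨m, rfl⟩ := hzt a
    obtain ⟨n', rfl⟩ := hzt b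
    exact zpow_mul_comm y m n'
  have hpow : ∀ a : Q ⧸ M, a ^ p = 1 := by
    intro a
    obtain ⟨m, rfl⟩ := hzt a
    rw [← zpow_natCast, ← zpow_mul, mul_comm, zpow_mul, zpow_natCast, hyp, one_zpow]
  have hidx : M.index = p := by
    have h1 : zpowers y = ⊤ := (Subgroup.eq_top_iff' _).mpr hzt
    have h2 : Nat.card (Q ⧸ M) = orderOf y := by
      rw [← Nat.card_zpowers y, h1, Subgroup.card_top]
    rw [Subgroup.index_eq_card, h2, horder]
  refine ⟨hnorm, hidx, normalClosure_le_normal ?_⟩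
  rintro w (⟨a, b, rfl⟩ | ⟨a, rfl⟩)
  · show ⁅a, b⁆ ∈ M
    rw [← QuotientGroup.eq_one_iff (N := M), ← QuotientGroup.mk'_apply, map_commutatorElement]
    exact commutatorElement_eq_one_iff_commute.mpr (hcomm _ _)
  · show a ^ p ∈ M
    rw [← QuotientGroup.eq_one_iff (N := M), ← QuotientGroup.mk'_apply, map_pow]
    exact hpow _

theorem rank_le_dp_of_pgroup (hp : p.Prime) (P : Type*) [Group P] [Finite P]
    (hP : IsPGroup p P) : Group.rank P ≤ Group.rank (P ⧸ commPPow p P) := by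
  classical
  obtain ⟨s, hcard, hgen⟩ := Group.rank_spec (P ⧸ commPPow p P)
  have hsurj := QuotientGroup.mk'_surjective (commPPow p P)
  set t : Finset P := s.image (Function.surjInv hsurj) with ht
  have himg : (QuotientGroup.mk' (commPPow p P)) '' ↑t = ↑s := by
    rw [ht, Finset.coe_image, Set.image_image]
    have : ∀ y : P ⧸ commPPow p P, QuotientGroup.mk' (commPPow p P) (Function.surjInv hsurj y) = y :=
      Function.surjInv_eq hsurj
    simp only [this, Set.image_id']
  have htop : Subgroup.closure (↑t : Set P) = ⊤ := by
    by_contra hne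
    obtain ⟨M, hM, hle⟩ :=
      (IsCoatomic.eq_top_or_exists_le_coatom (Subgroup.closure (↑t : Set P))).resolve_left hne
    obtain ⟨hnorm, -, hcle⟩ := coatom_p hp hP hM
    haveI := hnorm
    have hmap : (Subgroup.closure (↑t : Set P)).map (QuotientGroup.mk' (commPPow p P)) = ⊤ := by
      rw [MonoidHom.map_closure, himg, hgen]
    have hall : ∀ z : P, z ∈ M := by
      intro z
      have hz : QuotientGroup.mk' (commPPow p P) z ∈
          (Subgroup.closure (↑t : Set P)).map (QuotientGroup.mk' (commPPow p P)) :=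
        hmap ▸ mem_top _
      obtain ⟨k, hk, hkz⟩ := hz
      have : k⁻¹ * z ∈ commPPow p P := by
        rw [← QuotientGroup.eq_one_iff (N := commPPow p P), ← QuotientGroup.mk'_apply, map_mul,
          map_inv, hkz]
        simp
      have hzeq : z = k * (k⁻¹ * z) := by group
      rw [hzeq]
      exact M.mul_mem (hle hk) (hcle this)
    exact hM.1 ((Subgroup.eq_top_iff' M).mpr hall)
  calc Group.rank P ≤ t.card := Group.rank_le htop
    _ ≤ s.card := Finset.card_image_le
    _ = _ := hcard

end burnside

section indexp
open Subgroup
variable {p : ℕ}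

lemma commPPow_map_subtype_normal {Γ : Type*} [Group Γ] (H : Subgroup Γ) (hn : H.Normal) :
    ((commPPow p ↥H).map H.subtype).Normal := by
  constructor
  rintro x hx g
  obtain ⟨m, hm, rfl⟩ := hx
  let f : ↥H →* ↥H := ((MulAut.conj g).toMonoidHom.domRestrict H).codRestrict H
    (fun h => hn.conj_mem (h : Γ) h.2 g)
  refine ⟨f m, commPPow_le_comap f hm, rfl⟩

theorem dp_index_p (hp : p.Prime) (Γ : Type*) [Group Γ] [Group.FG Γ] (H : Subgroup Γ)
    (hnorm : H.Normal) (hidx : H.index = p) :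
    (dp p ↥H : ℤ) - 1 ≤ ((dp p Γ : ℤ) - 1) * p := by
  haveI := hnorm
  haveI : H.FiniteIndex := ⟨by rw [hidx]; exact hp.ne_zero⟩
  haveI : Group.FG ↥H := H.fg_of_index_ne_zero
  set N : Subgroup Γ := (commPPow p ↥H).map H.subtype with hN
  haveI hNn : N.Normal := commPPow_map_subtype_normal H hnorm
  have hNH : N ≤ H := map_subtype_le _
  haveI : Group.FG (Γ ⧸ N) := Group.fg_of_surjective (QuotientGroup.mk'_surjective N)
  set ψ : ↥H →* Γ ⧸ N := (QuotientGroup.mk' N).comp H.subtype with hψ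
  have hker : ψ.ker = commPPow p ↥H := by
    rw [hψ, ← MonoidHom.comap_ker, QuotientGroup.ker_mk', hN,
      Subgroup.comap_map_eq_self_of_injective H.subtype_injective]
  have e1 : (↥H ⧸ commPPow p ↥H) ≃* ψ.range :=
    (QuotientGroup.quotientMulEquivOfEq hker.symm).trans (QuotientGroup.quotientKerEquivRange ψ)
  have hrange : ψ.range = H.map (QuotientGroup.mk' N) := by
    rw [hψ, ← MonoidHom.map_range (QuotientGroup.mk' N) H.subtype, Subgroup.range_subtype]
  set Hbar : Subgroup (Γ ⧸ N) := H.map (QuotientGroup.mk' N) with hHbar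
  haveI : Hbar.Normal := hnorm.map _ (QuotientGroup.mk'_surjective N)
  have hHbarIdx : Hbar.index = p := by
    rw [hHbar, Subgroup.index_map_eq _ (QuotientGroup.mk'_surjective N)
      (by rw [QuotientGroup.ker_mk']; exact hNH), hidx]
  haveI : Hbar.FiniteIndex := ⟨by rw [hHbarIdx]; exact hp.ne_zero⟩
  -- finiteness
  haveI hfinHq : Finite (↥H ⧸ commPPow p ↥H) := finite_quot_commPPow ↥H hp.ne_zero
  haveI hfinRange : Finite ↥ψ.range := Finite.of_equiv _ e1.toEquiv
  haveI hfinHbar : Finite ↥Hbar := by rw [← hrange]; exact hfinRange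
  haveI : Finite ((Γ ⧸ N) ⧸ Hbar) :=
    Nat.finite_of_card_ne_zero (by rw [← Subgroup.index_eq_card, hHbarIdx]; exact hp.ne_zero)
  haveI : Finite (Γ ⧸ N) :=
    Finite.of_equiv _ (Subgroup.groupEquivQuotientProdSubgroup (s := Hbar)).symm
  -- p-group
  have hPp : IsPGroup p (Γ ⧸ N) := by
    intro x
    refine ⟨2, ?_⟩
    have h1 : x ^ p ∈ Hbar := by
      have hc : Nat.card ((Γ ⧸ N) ⧸ Hbar) = p := by rw [← Subgroup.index_eq_card, hHbarIdx]
      have h2 : (QuotientGroup.mk' Hbar) x ^ p = 1 := by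
        rw [← hc]; exact pow_card_eq_one'
      rwa [← map_pow, QuotientGroup.mk'_apply, QuotientGroup.eq_one_iff] at h2
    obtain ⟨h, hh, hhx⟩ := h1
    have h3 : (x ^ p) ^ p = 1 := by
      rw [← hhx, ← map_pow, QuotientGroup.mk'_apply, QuotientGroup.eq_one_iff]
      exact ⟨(⟨h, hh⟩ : ↥H) ^ p, subset_normalClosure (Or.inr ⟨⟨h, hh⟩, rfl⟩), rfl⟩
    rw [pow_two, pow_mul]
    exact h3
  -- assemble
  haveI : Group.FG (↥H ⧸ commPPow p ↥H) := inferInstance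
  haveI : Group.FG ↥ψ.range := Group.fg_of_finite
  haveI : Group.FG ↥Hbar := Group.fg_of_finite
  have hdpH : dp p ↥H = Group.rank ↥Hbar := by
    rw [dp_eq_rank, Group.rank_congr e1, Subgroup.rank_congr hrange]
  have hSch := sharp_schreier hp Hbar hHbarIdx
  have hBurn := rank_le_dp_of_pgroup hp (Γ ⧸ N) hPp
  have hquot : Group.rank ((Γ ⧸ N) ⧸ commPPow p (Γ ⧸ N)) = dp p (Γ ⧸ N) :=
    (dp_eq_rank _).symm
  have hdpP : dp p (Γ ⧸ N) ≤ dp p Γ :=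
    dp_le_of_surjective (QuotientGroup.mk' N) (QuotientGroup.mk'_surjective N)
  have hchain : (Group.rank (Γ ⧸ N) : ℤ) ≤ (dp p Γ : ℤ) := by
    exact_mod_cast (hBurn.trans (hquot ▸ hdpP))
  rw [hdpH]
  have hp0 : (0 : ℤ) ≤ p := by positivity
  nlinarith [hSch, hchain]

end indexp

section final
open Subgroup

theorem dp_aux (p : ℕ) (hp : p.Prime) :
    ∀ (k : ℕ) (Γ : Type) [Group Γ] [Group.FG Γ] (H : Subgroup Γ),
      H.Normal → H.index = p ^ k →
      (dp p ↥H : ℤ) - 1 ≤ ((dp p Γ : ℤ) - 1) * (p : ℤ) ^ k := by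
  intro k
  induction k with
  | zero =>
    intro Γ _ _ H hn hk
    have hTop : H = ⊤ := Subgroup.index_eq_one.mp (by simpa using hk)
    subst hTop
    haveI : (⊤ : Subgroup Γ).FiniteIndex := ⟨by simp [Subgroup.index_top]⟩
    haveI : Group.FG ↥(⊤ : Subgroup Γ) := (⊤ : Subgroup Γ).fg_of_index_ne_zero
    rw [dp_congr (Subgroup.topEquiv (G := Γ))]
    simp
  | succ k ih =>
    intro Γ _ _ H hn hk
    haveI := hn
    haveI : H.FiniteIndex := ⟨by rw [hk]; exact pow_ne_zero _ hp.ne_zero⟩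
    haveI : Group.FG ↥H := H.fg_of_index_ne_zero
    haveI hfinQ : Finite (Γ ⧸ H) :=
      Nat.finite_of_card_ne_zero
        (by rw [← Subgroup.index_eq_card, hk]; exact pow_ne_zero _ hp.ne_zero)
    have hQp : IsPGroup p (Γ ⧸ H) := by
      intro g
      refine ⟨k + 1, ?_⟩
      have : Nat.card (Γ ⧸ H) = p ^ (k + 1) := by rw [← Subgroup.index_eq_card, hk]
      rw [← this]
      exact pow_card_eq_one'
    have hne : Nontrivial (Γ ⧸ H) := by
      rw [← Finite.one_lt_card_iff_nontrivial, ← Subgroup.index_eq_card, hk]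
      exact Nat.one_lt_pow (Nat.succ_ne_zero k) hp.one_lt
    obtain ⟨Mb, hMb, -⟩ :=
      (eq_top_or_exists_le_coatom (⊥ : Subgroup (Γ ⧸ H))).resolve_left (by
        intro h
        obtain ⟨a, b, hab⟩ := hne
        have ha : a ∈ (⊥ : Subgroup (Γ ⧸ H)) := h ▸ mem_top a
        have hb : b ∈ (⊥ : Subgroup (Γ ⧸ H)) := h ▸ mem_top b
        rw [Subgroup.mem_bot] at ha hb
        exact hab (ha.trans hb.symm))
    obtain ⟨hMbNorm, hMbIdx, -⟩ := coatom_p hp hQp hMb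
    set M : Subgroup Γ := Mb.comap (QuotientGroup.mk' H) with hM
    have hHM : H ≤ M := by
      intro x hx
      show QuotientGroup.mk' H x ∈ Mb
      rw [QuotientGroup.mk'_apply, (QuotientGroup.eq_one_iff x).mpr hx]
      exact Mb.one_mem
    haveI hMnorm : M.Normal := hMbNorm.comap _
    have hMidx : M.index = p := by
      rw [hM, Subgroup.index_comap_of_surjective _ (QuotientGroup.mk'_surjective H), hMbIdx]
    haveI : M.FiniteIndex := ⟨by rw [hMidx]; exact hp.ne_zero⟩
    haveI : Group.FG ↥M := M.fg_of_index_ne_zero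
    have hrel : (H.subgroupOf M).index = p ^ k := by
      have h1 : H.relIndex M * M.index = H.index := Subgroup.relIndex_mul_index hHM
      rw [hMidx, hk, pow_succ] at h1
      exact Nat.eq_of_mul_eq_mul_right hp.pos h1
    haveI : (H.subgroupOf M).Normal := hn.subgroupOf M
    haveI : (H.subgroupOf M).FiniteIndex := ⟨by rw [hrel]; exact pow_ne_zero _ hp.ne_zero⟩
    haveI : Group.FG ↥(H.subgroupOf M) := (H.subgroupOf M).fg_of_index_ne_zero
    have hih := ih ↥M (H.subgroupOf M) inferInstance hrel
    have hcongr : dp p ↥(H.subgroupOf M) = dp p ↥H :=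
      dp_congr (Subgroup.subgroupOfEquivOfLe hHM)
    rw [hcongr] at hih
    have hMlem := dp_index_p hp Γ M hMnorm hMidx
    have hpk : (0 : ℤ) ≤ (p : ℤ) ^ k := by positivity
    calc (dp p ↥H : ℤ) - 1 ≤ ((dp p ↥M : ℤ) - 1) * (p : ℤ) ^ k := hih
      _ ≤ (((dp p Γ : ℤ) - 1) * p) * (p : ℤ) ^ k := mul_le_mul_of_nonneg_right hMlem hpk
      _ = ((dp p Γ : ℤ) - 1) * (p : ℤ) ^ (k + 1) := by ring

end final

/-- If `p` is a prime, `Γ` is a finitely generated group and `H` is a normal subgroup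
of `p`-power index, then `d_p(H) - 1 ≤ (d_p(Γ) - 1)·[Γ : H]`. -/
theorem dp_sub_one_le (p : ℕ) (hp : p.Prime) (Γ : Type) [Group Γ] [Group.FG Γ]
    (H : Subgroup Γ) (hnorm : H.Normal) (k : ℕ) (hk : H.index = p ^ k) :
    (dp p H : ℤ) - 1 ≤ ((dp p Γ : ℤ) - 1) * (H.index : ℤ) := by
  have h := dp_aux p hp k Γ H hnorm hk
  rw [hk]
  push_cast
  exact h
end

section
/- Let Γ be a finitely generated residually finite group and {H_n} a lattice of normal subgroups of finite index in Γ with ⋂ H_n = 1. Let L be a subgroup of Γ acting by left multiplication on Γ̂ = Γ̂_{(H_n)}, with orbit equivalence relation E_L^{Γ̂}, and identify L̂ = L̂_{(L∩H_n)} with a closed subgroup of Γ̂. Let S be a graphing of E_L^{Γ̂} and let ḡ ∈ Γ̂ be a right coset representative of L̂ in Γ̂. Then S_ḡ = {(x,y) ∈ L̂ × L̂ : (xḡ, yḡ) ∈ S} is a graphing of the orbit equivalence relation E_L^{L̂} of the left-multiplication action of L on L̂. -/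
/-- The quotient of `Γ` by the normal core of `H` (for normal `H` this is just `Γ ⧸ H`),
regarded as a discrete topological group. -/
def NQuot {Γ : Type*} [Group Γ] (H : Subgroup Γ) : Type _ := Γ ⧸ H.normalCore

noncomputable instance {Γ : Type*} [Group Γ] (H : Subgroup Γ) : Group (NQuot H) :=
  inferInstanceAs (Group (Γ ⧸ H.normalCore))

instance {Γ : Type*} [Group Γ] (H : Subgroup Γ) : TopologicalSpace (NQuot H) := ⊥

instance {Γ : Type*} [Group Γ] (H : Subgroup Γ) : DiscreteTopology (NQuot H) := ⟨rfl⟩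

instance {Γ : Type*} [Group Γ] (H : Subgroup Γ) : IsTopologicalGroup (NQuot H) where
  continuous_mul := continuous_of_discreteTopology
  continuous_inv := continuous_of_discreteTopology

/-- The diagonal homomorphism from `Γ` to the product of its quotients by the
members of `S`. -/
def diagHom {Γ : Type*} [Group Γ] (S : Set (Subgroup Γ)) :
    Γ →* Π H : S, NQuot (H : Subgroup Γ) where
  toFun g := fun _ => QuotientGroup.mk g
  map_one' := rfl
  map_mul' _ _ := rfl

/-- The completion `Γ̂_{(Hₙ)}` of `Γ` with respect to the family of finite-index normal
subgroups `S`: the closure of the image of `Γ` in the product of the (finite, discrete)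
quotients `Γ ⧸ H`, `H ∈ S`.  For a lattice `S` of finite-index normal subgroups this is
(the image of) the inverse limit of the quotients `Γ ⧸ H`. -/
noncomputable def LatticeCompletion {Γ : Type*} [Group Γ] (S : Set (Subgroup Γ)) :
    Subgroup (Π H : S, NQuot (H : Subgroup Γ)) :=
  (diagHom S).range.topologicalClosure

/-- The canonical homomorphism `Γ → Γ̂_{(Hₙ)}`. -/
noncomputable def completionHom {Γ : Type*} [Group Γ] (S : Set (Subgroup Γ)) :
    Γ →* (LatticeCompletion S) :=
  (diagHom S).codRestrict (LatticeCompletion S)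
    (fun g => Subgroup.le_topologicalClosure _ ⟨g, rfl⟩)

noncomputable instance {Γ : Type*} [Group Γ] (S : Set (Subgroup Γ)) :
    MeasurableSpace (LatticeCompletion S) := borel _

instance {Γ : Type*} [Group Γ] (S : Set (Subgroup Γ)) :
    BorelSpace (LatticeCompletion S) := ⟨rfl⟩

/-- The lattice `{L ∩ Hₙ}` of subgroups of `L` induced by a family `S` of subgroups
of the ambient group. -/
def restrictedLattice {Γ : Type*} [Group Γ] (L : Subgroup Γ) (S : Set (Subgroup Γ)) :
    Set (Subgroup L) :=
  (fun H : Subgroup Γ => H.subgroupOf L) '' S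

open MeasureTheory
open scoped ENNReal

/-- The orbit equivalence relation (as a subset of `G × G`) of the action of a
subset `Λ ⊆ G` on `G` by left multiplication. -/
def leftOrbitRel {G : Type*} [Group G] (Λ : Set G) : Set (G × G) :=
  {p | ∃ l ∈ Λ, p.2 = l * p.1}

/-- A graphing of the orbit equivalence relation of the left-multiplication action of
`Λ ⊆ G` on `G`: a Borel subgraph `S` of the relation such that any two equivalent points
are joined by a path of (possibly reversed) edges of `S`. -/
def IsGraphing {G : Type*} [Group G] [MeasurableSpace G] (Λ : Set G) (S : Set (G × G)) :
    Prop :=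
  MeasurableSet S ∧ S ⊆ leftOrbitRel Λ ∧
    ∀ p ∈ leftOrbitRel Λ,
      Relation.ReflTransGen (fun a b => (a, b) ∈ S ∨ (b, a) ∈ S) p.1 p.2

/-- The edge-measure `e(S) = ∫ deg_S(x) dμ(x)` of a subgraph `S ⊆ G × G`. -/
noncomputable def edgeMeasure {G : Type*} [MeasurableSpace G] (μ : Measure G)
    (S : Set (G × G)) : ℝ≥0∞ :=
  ∫⁻ x, ({y | (x, y) ∈ S}.encard : ℝ≥0∞) ∂μ

/-- The cost of the left-multiplication action of `Λ ⊆ G` on `(G, μ)`: the infimum of the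
edge-measures of all graphings of the associated orbit equivalence relation. -/
noncomputable def lmCost {G : Type*} [Group G] [MeasurableSpace G] (μ : Measure G)
    (Λ : Set G) : ℝ≥0∞ :=
  ⨅ S ∈ {S : Set (G × G) | IsGraphing Λ S}, edgeMeasure μ S

def ResiduallyFinite (G : Type*) [Group G] : Prop :=
  ∀ g : G, g ≠ 1 → ∃ H : Subgroup G, H.Normal ∧ H.FiniteIndex ∧ g ∉ H

/-- The copy of `L̂ = L̂_{(L ∩ Hₙ)}` inside `Γ̂ = Γ̂_{(Hₙ)}`: the closed subgroup of `Γ̂`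
obtained as the closure of the image of `L`, with which `L̂` is identified. -/
noncomputable def LhatIn {Γ : Type*} [Group Γ] (L : Subgroup Γ) (S : Set (Subgroup Γ)) :
    Subgroup (LatticeCompletion S) :=
  ((completionHom S).comp L.subtype).range.topologicalClosure

/-- The canonical map `L → L̂ ⊆ Γ̂`. -/
noncomputable def toLhatIn {Γ : Type*} [Group Γ] (L : Subgroup Γ) (S : Set (Subgroup Γ)) :
    L →* (LhatIn L S) :=
  ((completionHom S).comp L.subtype).codRestrict _
    (fun l => Subgroup.le_topologicalClosure _ ⟨l, rfl⟩)

/-- `S_ḡ = {(x, y) ∈ L̂ × L̂ : (xḡ, yḡ) ∈ S}`, for `S ⊆ Γ̂ × Γ̂` and `ḡ ∈ Γ̂`. -/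
def restrictGraph {Γ : Type*} [Group Γ] (L : Subgroup Γ) (S : Set (Subgroup Γ))
    (T : Set ((LatticeCompletion S) × (LatticeCompletion S))) (g : LatticeCompletion S) :
    Set ((LhatIn L S) × (LhatIn L S)) :=
  {p | ((p.1 : LatticeCompletion S) * g, (p.2 : LatticeCompletion S) * g) ∈ T}

/-- **Restricting a graphing to a coset.**  Let `Γ` be a finitely generated residually
finite group and `S = {Hₙ}` a lattice of finite-index normal subgroups with `⋂ Hₙ = 1`.
Let `L ≤ Γ` act by left multiplication on `Γ̂ = Γ̂_{(Hₙ)}`, and identify `L̂ = L̂_{(L∩Hₙ)}`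
with the closed subgroup `LhatIn L S` of `Γ̂`.  If `T` is a graphing of the orbit relation
`E_L^{Γ̂}` and `ḡ ∈ Γ̂` (a representative of its right coset `L̂ḡ`), then
`S_ḡ = {(x,y) ∈ L̂ × L̂ : (xḡ, yḡ) ∈ T}` is a graphing of the orbit relation `E_L^{L̂}` of
the left-multiplication action of `L` on `L̂`. -/
theorem isGraphing_restrictGraph (Γ : Type) [Group Γ] [Group.FG Γ]
    (hres : ResiduallyFinite Γ)
    (S : Set (Subgroup Γ)) (hne : S.Nonempty)
    (hnorm : ∀ H ∈ S, H.Normal) (hfi : ∀ H ∈ S, H.FiniteIndex)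
    (hmeet : ∀ H ∈ S, ∀ K ∈ S, H ⊓ K ∈ S) (htriv : sInf S = ⊥)
    (L : Subgroup Γ)
    (T : Set ((LatticeCompletion S) × (LatticeCompletion S)))
    (hT : IsGraphing (Set.range ((completionHom S).comp L.subtype)) T)
    (g : LatticeCompletion S) :
    IsGraphing (Set.range (toLhatIn L S)) (restrictGraph L S T g) := by
  classical
  obtain ⟨hTmeas, hTsub, hTconn⟩ := hT
  have hrange : ((completionHom S).comp L.subtype).range ≤ LhatIn L S :=
    Subgroup.le_topologicalClosure _
  refine ⟨?_, ?_, ?_⟩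
  · -- measurability
    have hf : Measurable (fun x : LhatIn L S => (x : LatticeCompletion S) * g) := by
      have hc : Continuous (fun a : LatticeCompletion S => a * g) :=
        continuous_id.mul continuous_const
      exact hc.measurable.comp measurable_subtype_coe
    have heq : restrictGraph L S T g =
        (fun p : LhatIn L S × LhatIn L S =>
          ((p.1 : LatticeCompletion S) * g, (p.2 : LatticeCompletion S) * g)) ⁻¹' T := rfl
    rw [heq]
    exact ((hf.comp measurable_fst).prodMk (hf.comp measurable_snd)) hTmeas
  · rintro ⟨x, y⟩ hxy
    obtain ⟨l, ⟨l₀, rfl⟩, hl⟩ := hTsub hxy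
    refine ⟨toLhatIn L S l₀, ⟨l₀, rfl⟩, ?_⟩
    apply Subtype.ext
    have h1 : (y : LatticeCompletion S) * g =
        ((completionHom S).comp L.subtype) l₀ * ((x : LatticeCompletion S) * g) := hl
    have h2 : (y : LatticeCompletion S) =
        ((completionHom S).comp L.subtype) l₀ * (x : LatticeCompletion S) := by
      rw [← mul_assoc] at h1
      exact mul_right_cancel h1
    exact h2
  · rintro ⟨x, y⟩ ⟨m, ⟨l₀, rfl⟩, hm⟩
    have hm' : (y : LatticeCompletion S) =
        ((completionHom S).comp L.subtype) l₀ * (x : LatticeCompletion S) := by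
      have := congrArg (fun a : LhatIn L S => (a : LatticeCompletion S)) hm
      exact this
    have hmem : ((x : LatticeCompletion S) * g, (y : LatticeCompletion S) * g) ∈
        leftOrbitRel (Set.range ((completionHom S).comp L.subtype)) := by
      exact ⟨((completionHom S).comp L.subtype) l₀, ⟨l₀, rfl⟩, by
        simp only [hm', mul_assoc]⟩
    have hchain := hTconn _ hmem
    set R' : LhatIn L S → LhatIn L S → Prop := fun a b =>
      (a, b) ∈ restrictGraph L S T g ∨ (b, a) ∈ restrictGraph L S T g with hR'
    have key : ∀ b, Relation.ReflTransGen (fun a b => (a, b) ∈ T ∨ (b, a) ∈ T)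
        ((x : LatticeCompletion S) * g) b →
        ∃ hb : b * g⁻¹ ∈ LhatIn L S,
          Relation.ReflTransGen R' x ⟨b * g⁻¹, hb⟩ := by
      intro b hb
      induction hb with
      | refl =>
        refine ⟨by simpa using x.2, ?_⟩
        have hx : (⟨(x : LatticeCompletion S) * g * g⁻¹, by simpa using x.2⟩ :
            LhatIn L S) = x := Subtype.ext (by simp)
        rw [hx]
      | tail hab hstep ih =>
        obtain ⟨hPb, hchainb⟩ := ih
        rename_i b' c'
        rcases hstep with h | h
        · obtain ⟨l, hlr, hc⟩ := hTsub h
          have hc2 : c' = l * b' := hc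
          have hPc : c' * g⁻¹ ∈ LhatIn L S := by
            rw [hc2, mul_assoc]
            exact ((LhatIn L S).mul_mem (hrange hlr) hPb)
          refine ⟨hPc, hchainb.tail (Or.inl ?_)⟩
          show (b' * g⁻¹ * g, c' * g⁻¹ * g) ∈ T
          simpa using h
        · obtain ⟨l, hlr, hc⟩ := hTsub h
          have hPc : c' * g⁻¹ ∈ LhatIn L S := by
            have hc2 : b' = l * c' := hc
            have : c' = l⁻¹ * b' := by rw [hc2]; group
            rw [this, mul_assoc]
            exact ((LhatIn L S).mul_mem ((LhatIn L S).inv_mem (hrange hlr)) hPb)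
          refine ⟨hPc, hchainb.tail (Or.inr ?_)⟩
          show (c' * g⁻¹ * g, b' * g⁻¹ * g) ∈ T
          simpa using h
    obtain ⟨hPy, hch⟩ := key _ hchain
    have hy : (⟨(y : LatticeCompletion S) * g * g⁻¹, hPy⟩ : LhatIn L S) = y :=
      Subtype.ext (by simp)
    rw [hy] at hch
    exact hch
end

section
/- Let Γ be a finitely generated residually finite group and {H_n} a lattice of normal subgroups of finite index in Γ with ⋂ H_n = 1. Let L be a subgroup of Γ, let Γ̂ = Γ̂_{(H_n)}, and identify L̂ = L̂_{(L∩H_n)} with a closed subgroup of Γ̂. There exists a right transversal T of L̂ in Γ̂ (the image of a continuous section of the projection Γ̂ → Γ̂/L̂) such that every graphing S′ of the orbit equivalence relation E_L^{L̂} of the left-multiplication action of L on L̂ is of the form S′ = S_t = {(x,y) ∈ L̂ × L̂ : (xt, yt) ∈ S} for some graphing S of the orbit equivalence relation E_L^{Γ̂} of the left-multiplication action of L on Γ̂ and some t ∈ T. -/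
open MeasureTheory
open scoped ENNReal

section Countability

lemma countable_of_group_fg {Γ : Type} [Group Γ] [Group.FG Γ] : Countable Γ := by
  obtain ⟨T, hT, hfin⟩ := Group.fg_iff.mp ‹_›
  haveI : Finite ↥T := hfin.to_subtype
  haveI : Countable (FreeGroup ↥T) := by unfold FreeGroup; infer_instance
  have hsurj : Function.Surjective (FreeGroup.lift (Subtype.val : ↥T → Γ)) := by
    rw [← MonoidHom.range_eq_top, FreeGroup.range_lift_eq_closure, Subtype.range_coe, hT]
  exact hsurj.countable

lemma countable_finiteIndex_subgroups {Γ : Type} [Group Γ] [Group.FG Γ]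
    (S : Set (Subgroup Γ)) (hfi : ∀ H ∈ S, H.FiniteIndex) : Countable S := by
  classical
  obtain ⟨T, hTtop, hTfin⟩ := Group.fg_iff.mp ‹Group.FG Γ›
  haveI : Finite ↥T := hTfin.to_subtype
  haveI : ∀ H : S, Finite (Γ ⧸ (H : Subgroup Γ)) := fun H => by
    haveI := hfi H.1 H.2; infer_instance
  set n : S → ℕ := fun H => Nat.card (Γ ⧸ (H : Subgroup Γ)) with hn_def
  set b : ∀ H : S, (Γ ⧸ (H : Subgroup Γ)) ≃ Fin (n H) := fun H => Finite.equivFin _ with hb_def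
  set q : ∀ H : S, Γ → Fin (n H) → Fin (n H) :=
    fun H g i => (b H) (g • (b H).symm i) with hq_def
  set p : S → Γ → ℕ → ℕ := fun H g m =>
    if h : m < n H then (q H g ⟨m, h⟩).val else m with hp_def
  set c : S → Γ → ℕ := fun H g => ((b H) (QuotientGroup.mk g)).val with hc_def
  have hq_mul : ∀ (J : S) (g₁ g₂ : Γ) (i : Fin (n J)), q J (g₁ * g₂) i = q J g₁ (q J g₂ i) := by
    intro J g₁ g₂ i
    simp only [hq_def, Equiv.symm_apply_apply, mul_smul]
  have hq_one : ∀ (J : S) (i : Fin (n J)), q J 1 i = i := by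
    intro J i
    simp only [hq_def, one_smul, Equiv.apply_symm_apply]
  have hp_mul : ∀ (J : S) (g₁ g₂ : Γ) (m : ℕ), p J (g₁ * g₂) m = p J g₁ (p J g₂ m) := by
    intro J g₁ g₂ m
    by_cases hm : m < n J
    · simp only [hp_def, dif_pos hm]
      rw [dif_pos (Fin.is_lt (q J g₂ ⟨m, hm⟩))]
      rw [Fin.eta, hq_mul]
    · simp only [hp_def, dif_neg hm]
  have hp_one : ∀ (J : S) (m : ℕ), p J 1 m = m := by
    intro J m
    by_cases hm : m < n J
    · simp only [hp_def, dif_pos hm, hq_one]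
    · simp only [hp_def, dif_neg hm]
  have hp_inv_cancel : ∀ (J : S) (g : Γ) (m : ℕ), p J g⁻¹ (p J g m) = m := by
    intro J g m
    rw [← hp_mul, inv_mul_cancel, hp_one]
  have hp_cancel_inv : ∀ (J : S) (g : Γ) (m : ℕ), p J g (p J g⁻¹ m) = m := by
    intro J g m
    rw [← hp_mul, mul_inv_cancel, hp_one]
  have hc_eq : ∀ (J : S) (g : Γ), c J g = p J g (c J 1) := by
    intro J g
    have h1 : c J 1 < n J := Fin.is_lt _
    simp only [hc_def, hp_def]
    rw [dif_pos h1]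
    simp only [hq_def, Fin.eta, Equiv.symm_apply_apply]
    rw [MulAction.Quotient.smul_mk, smul_eq_mul, mul_one]
  -- the encoding
  set D : S → ℕ × (↥T → List ℕ) × ℕ := fun H =>
    (n H, fun t => List.ofFn (fun i : Fin (n H) => p H t.1 i.val), c H 1) with hD_def
  have hD_inj : Function.Injective D := by
    intro H K hHK
    have hn : n H = n K := congrArg Prod.fst hHK
    have hbase : c H 1 = c K 1 := congrArg (fun z => z.2.2) hHK
    have hlist : ∀ t : ↥T, List.ofFn (fun i : Fin (n H) => p H t.1 i.val)
        = List.ofFn (fun i : Fin (n K) => p K t.1 i.val) := by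
      intro t
      exact congrFun (congrArg (fun z => z.2.1) hHK) t
    have hpt : ∀ t : ↥T, ∀ m : ℕ, p H t.1 m = p K t.1 m := by
      intro t m
      by_cases hm : m < n H
      · have hm' : m < n K := hn ▸ hm
        have h0 := congrArg (fun l : List ℕ => l[m]?) (hlist t)
        simp only [List.getElem?_ofFn, List.ofFnNthVal, dif_pos hm, dif_pos hm'] at h0
        exact Option.some_injective _ h0
      · have hm' : ¬ m < n K := hn ▸ hm
        simp only [hp_def, dif_neg hm, dif_neg hm']
    have hall : ∀ g : Γ, ∀ m : ℕ, p H g m = p K g m := by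
      intro g
      have hg : g ∈ Subgroup.closure T := by rw [hTtop]; trivial
      refine Subgroup.closure_induction (p := fun g _ => ∀ m : ℕ, p H g m = p K g m)
        (fun x hx => hpt ⟨x, hx⟩) (fun m => by rw [hp_one, hp_one])
        (fun x y _ _ hx hy m => by rw [hp_mul, hp_mul, hx, hy]) ?_ hg
      intro x _ hx m
      calc p H x⁻¹ m = p H x⁻¹ (p K x (p K x⁻¹ m)) := by rw [hp_cancel_inv]
        _ = p H x⁻¹ (p H x (p K x⁻¹ m)) := by rw [hx]
        _ = p K x⁻¹ m := by rw [hp_inv_cancel]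
    have hc_all : ∀ g : Γ, c H g = c K g := by
      intro g
      rw [hc_eq H g, hc_eq K g, hbase, hall g]
    have hmem : ∀ (J : S) (g : Γ), g ∈ (J : Subgroup Γ) ↔ c J g = c J 1 := by
      intro J g
      constructor
      · intro hg
        have : (QuotientGroup.mk g : Γ ⧸ (J : Subgroup Γ)) = QuotientGroup.mk 1 := by
          rw [QuotientGroup.eq]
          simpa using hg
        simp only [hc_def, this]
      · intro hg
        have : (QuotientGroup.mk g : Γ ⧸ (J : Subgroup Γ)) = QuotientGroup.mk 1 :=
          (b J).injective (Fin.val_injective hg)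
        rw [QuotientGroup.eq] at this
        simpa using this
      -- done
    apply Subtype.ext
    ext g
    rw [hmem H g, hmem K g, hc_all, hbase]
  exact hD_inj.countable

end Countability
section Chain

variable {Γ : Type} [Group Γ] (S : Set (Subgroup Γ)) (L : Subgroup Γ)
  (e : ℕ → S) (ι : ∀ H : S, NQuot (H : Subgroup Γ) → ℕ)

/-- Coordinate of an element of the completion at stage `n`, encoded in `ℕ`. -/
noncomputable def coordF (n : ℕ) (x : LatticeCompletion S) : ℕ :=
  ι (e n) (x.1 (e n))

/-- Decreasing chain of subsets of the coset `L̂ g` obtained by successively minimizing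
coordinates. -/
noncomputable def chainC (g : LatticeCompletion S) : ℕ → Set (LatticeCompletion S)
  | 0 => (fun ℓ => ℓ * g) '' (LhatIn L S : Set (LatticeCompletion S))
  | (n + 1) => {x ∈ chainC g n |
      coordF S e ι n x = sInf (coordF S e ι n '' chainC g n)}

lemma chainC_succ_subset (g : LatticeCompletion S) (n : ℕ) :
    chainC S L e ι g (n + 1) ⊆ chainC S L e ι g n := fun _ hx => hx.1

lemma chainC_subset_zero (g : LatticeCompletion S) (n : ℕ) :
    chainC S L e ι g n ⊆ chainC S L e ι g 0 := by
  induction n with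
  | zero => exact subset_rfl
  | succ n ih => exact (chainC_succ_subset S L e ι g n).trans ih

lemma mem_chainC_zero {g x : LatticeCompletion S} :
    x ∈ chainC S L e ι g 0 ↔ ∃ ℓ ∈ LhatIn L S, ℓ * g = x := by
  simp only [chainC, Set.mem_image, SetLike.mem_coe]

lemma mem_chainC_succ {g x : LatticeCompletion S} {n : ℕ} :
    x ∈ chainC S L e ι g (n + 1) ↔ x ∈ chainC S L e ι g n ∧
      coordF S e ι n x = sInf (coordF S e ι n '' chainC S L e ι g n) := Iff.rfl

lemma chainC_nonempty (g : LatticeCompletion S) (n : ℕ) :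
    (chainC S L e ι g n).Nonempty := by
  induction n with
  | zero => exact ⟨g, (mem_chainC_zero S L e ι).mpr ⟨1, (LhatIn L S).one_mem, one_mul g⟩⟩
  | succ n ih =>
    obtain ⟨x, hx, hxe⟩ := Nat.sInf_mem (ih.image (coordF S e ι n))
    exact ⟨x, (mem_chainC_succ S L e ι).mpr ⟨hx, hxe⟩⟩

lemma coordF_mul (n : ℕ) (ℓ g : LatticeCompletion S) :
    coordF S e ι n (ℓ * g) = ι (e n) (ℓ.1 (e n) * g.1 (e n)) := rfl

lemma chainC_translate (g : LatticeCompletion S) {ℓ : LatticeCompletion S}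
    (hℓ : ℓ ∈ LhatIn L S) (n : ℕ) :
    chainC S L e ι (ℓ * g) n = chainC S L e ι g n := by
  induction n with
  | zero =>
    ext x
    simp only [mem_chainC_zero S L e ι]
    constructor
    · rintro ⟨l, hl, rfl⟩
      exact ⟨l * ℓ, mul_mem hl hℓ, mul_assoc _ _ _⟩
    · rintro ⟨l, hl, rfl⟩
      refine ⟨l * ℓ⁻¹, mul_mem hl (inv_mem hℓ), ?_⟩
      rw [mul_assoc, inv_mul_cancel_left]
  | succ n ih => simp only [chainC, ih]

lemma mem_chainC_zero_iff_mem {g ℓ : LatticeCompletion S} :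
    ℓ * g ∈ chainC S L e ι g 0 ↔ ℓ ∈ LhatIn L S := by
  rw [mem_chainC_zero S L e ι]
  constructor
  · rintro ⟨l, hl, hlg⟩
    rwa [← mul_right_cancel hlg]
  · intro h
    exact ⟨ℓ, h, rfl⟩

lemma chainC_transfer (n : ℕ) : ∀ g g' : LatticeCompletion S,
    (∀ i < n, g.1 (e i) = g'.1 (e i)) →
    ∀ ℓ : LatticeCompletion S,
      (ℓ * g ∈ chainC S L e ι g n ↔ ℓ * g' ∈ chainC S L e ι g' n) := by
  induction n with
  | zero =>
    intro g g' _ ℓ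
    rw [mem_chainC_zero_iff_mem, mem_chainC_zero_iff_mem]
  | succ n ih =>
    intro g g' hag ℓ
    have hag' : ∀ i < n, g.1 (e i) = g'.1 (e i) := fun i hi => hag i (Nat.lt_succ_of_lt hi)
    have hcoord : ∀ ℓ₀ : LatticeCompletion S,
        coordF S e ι n (ℓ₀ * g) = coordF S e ι n (ℓ₀ * g') := by
      intro ℓ₀
      rw [coordF_mul, coordF_mul, hag n (Nat.lt_succ_self n)]
    have himg : coordF S e ι n '' chainC S L e ι g n
        = coordF S e ι n '' chainC S L e ι g' n := by
      apply Set.Subset.antisymm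
      · rintro _ ⟨x, hx, rfl⟩
        obtain ⟨l, _, rfl⟩ :=
          (mem_chainC_zero S L e ι).mp (chainC_subset_zero S L e ι g n hx)
        exact ⟨l * g', (ih g g' hag' l).mp hx, (hcoord l).symm⟩
      · rintro _ ⟨x, hx, rfl⟩
        obtain ⟨l, _, rfl⟩ :=
          (mem_chainC_zero S L e ι).mp (chainC_subset_zero S L e ι g' n hx)
        exact ⟨l * g, (ih g g' hag' l).mpr hx, hcoord l⟩
    rw [mem_chainC_succ S L e ι, mem_chainC_succ S L e ι]
    constructor
    · rintro ⟨hx, hc⟩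
      refine ⟨(ih g g' hag' ℓ).mp hx, ?_⟩
      rw [← hcoord ℓ, ← himg]
      exact hc
    · rintro ⟨hx, hc⟩
      refine ⟨(ih g g' hag' ℓ).mpr hx, ?_⟩
      rw [hcoord ℓ, himg]
      exact hc

lemma chainC_image_congr (n : ℕ) (g g' : LatticeCompletion S)
    (hag : ∀ i < n + 1, g.1 (e i) = g'.1 (e i)) :
    coordF S e ι n '' chainC S L e ι g n = coordF S e ι n '' chainC S L e ι g' n := by
  have hag' : ∀ i < n, g.1 (e i) = g'.1 (e i) := fun i hi => hag i (Nat.lt_succ_of_lt hi)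
  have hcoord : ∀ ℓ₀ : LatticeCompletion S,
      coordF S e ι n (ℓ₀ * g) = coordF S e ι n (ℓ₀ * g') := by
    intro ℓ₀
    rw [coordF_mul, coordF_mul, hag n (Nat.lt_succ_self n)]
  apply Set.Subset.antisymm
  · rintro _ ⟨x, hx, rfl⟩
    obtain ⟨l, _, rfl⟩ :=
      (mem_chainC_zero S L e ι).mp (chainC_subset_zero S L e ι g n hx)
    exact ⟨l * g', (chainC_transfer S L e ι n g g' hag' l).mp hx, (hcoord l).symm⟩
  · rintro _ ⟨x, hx, rfl⟩
    obtain ⟨l, _, rfl⟩ :=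
      (mem_chainC_zero S L e ι).mp (chainC_subset_zero S L e ι g' n hx)
    exact ⟨l * g, (chainC_transfer S L e ι n g g' hag' l).mpr hx, hcoord l⟩

lemma chainC_isClosed (hLc : IsCompact (LhatIn L S : Set (LatticeCompletion S)))
    (g : LatticeCompletion S) (n : ℕ) : IsClosed (chainC S L e ι g n) := by
  induction n with
  | zero => exact (hLc.image (continuous_id.mul continuous_const)).isClosed
  | succ n ih =>
    have heq : chainC S L e ι g (n + 1) = chainC S L e ι g n ∩
        ((fun x : LatticeCompletion S => x.1 (e n)) ⁻¹'
          {a | ι (e n) a = sInf (coordF S e ι n '' chainC S L e ι g n)}) := rfl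
    rw [heq]
    exact ih.inter (IsClosed.preimage
      ((continuous_apply (e n)).comp continuous_subtype_val) (isClosed_discrete _))

lemma chainC_unique (he : Function.Surjective e)
    (hι : ∀ H : S, Function.Injective (ι H)) (g x y : LatticeCompletion S)
    (hx : ∀ n, x ∈ chainC S L e ι g n) (hy : ∀ n, y ∈ chainC S L e ι g n) : x = y := by
  apply Subtype.ext
  funext H
  obtain ⟨n, rfl⟩ := he H
  have h1 := ((mem_chainC_succ S L e ι).mp (hx (n + 1))).2
  have h2 := ((mem_chainC_succ S L e ι).mp (hy (n + 1))).2
  exact hι (e n) (h1.trans h2.symm)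

end Chain
/-- **Every graphing of the restricted action comes from a graphing upstairs.**  Let `Γ` be
a finitely generated residually finite group, `S = {Hₙ}` a lattice of finite-index normal
subgroups with `⋂ Hₙ = 1`, and `L ≤ Γ`; identify `L̂ = L̂_{(L∩Hₙ)}` with the closed
subgroup `LhatIn L S` of `Γ̂ = Γ̂_{(Hₙ)}`.  There is a right transversal of `L̂` in `Γ̂`,
given as the image `T = range σ` of a continuous selector `σ` of right `L̂`-cosets (i.e.
`σ` is constant on the right cosets `L̂g` and `σ g` lies in the coset of `g`; equivalently
`σ` is a continuous section of `Γ̂ → Γ̂/L̂` composed with the projection), such that every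
graphing `S'` of the orbit relation `E_L^{L̂}` of the left-multiplication action of `L` on
`L̂` has the form `S' = S_t = {(x,y) ∈ L̂ × L̂ : (xt, yt) ∈ S}` for some graphing `S` of the
orbit relation `E_L^{Γ̂}` and some `t ∈ T`. -/
theorem exists_transversal_graphing (Γ : Type) [Group Γ] [Group.FG Γ]
    (hres : ResiduallyFinite Γ)
    (S : Set (Subgroup Γ)) (hne : S.Nonempty)
    (hnorm : ∀ H ∈ S, H.Normal) (hfi : ∀ H ∈ S, H.FiniteIndex)
    (hmeet : ∀ H ∈ S, ∀ K ∈ S, H ⊓ K ∈ S) (htriv : sInf S = ⊥)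
    (L : Subgroup Γ) :
    ∃ σ : (LatticeCompletion S) → (LatticeCompletion S),
      Continuous σ ∧
      (∀ ℓ ∈ LhatIn L S, ∀ g, σ (ℓ * g) = σ g) ∧
      (∀ g, ∃ ℓ ∈ LhatIn L S, g = ℓ * σ g) ∧
      ∀ S' : Set ((LhatIn L S) × (LhatIn L S)),
        IsGraphing (Set.range (toLhatIn L S)) S' →
        ∃ T : Set ((LatticeCompletion S) × (LatticeCompletion S)),
          IsGraphing (Set.range ((completionHom S).comp L.subtype)) T ∧
          ∃ t ∈ Set.range σ, S' = restrictGraph L S T t := by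
  classical
  haveI hcountΓ : Countable Γ := countable_of_group_fg
  haveI hcountS : Countable S := countable_finiteIndex_subgroups S hfi
  haveI hfinQ : ∀ H : S, Finite (NQuot (H : Subgroup Γ)) := fun H => by
    haveI := hfi H.1 H.2
    exact inferInstanceAs (Finite (Γ ⧸ (H : Subgroup Γ).normalCore))
  haveI : ∀ H : S, CompactSpace (NQuot (H : Subgroup Γ)) := fun _ => Finite.compactSpace
  have hGclosed : IsClosed (LatticeCompletion S : Set (Π H : S, NQuot (H : Subgroup Γ))) :=
    Subgroup.isClosed_topologicalClosure _
  haveI : CompactSpace (LatticeCompletion S) := isCompact_iff_compactSpace.mp hGclosed.isCompact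
  have hLclosed : IsClosed (LhatIn L S : Set (LatticeCompletion S)) :=
    Subgroup.isClosed_topologicalClosure _
  have hLcomp : IsCompact (LhatIn L S : Set (LatticeCompletion S)) := hLclosed.isCompact
  haveI : Nonempty S := hne.to_subtype
  obtain ⟨e, he⟩ := exists_surjective_nat S
  have hι0 : ∀ H : S, ∃ f : NQuot (H : Subgroup Γ) → ℕ, Function.Injective f := fun _ =>
    exists_injective_nat _
  choose ι hι using hι0
  have hinter : ∀ g : LatticeCompletion S, (⋂ n, chainC S L e ι g n).Nonempty := by
    intro g
    exact IsCompact.nonempty_iInter_of_sequence_nonempty_isCompact_isClosed _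
      (chainC_succ_subset S L e ι g) (chainC_nonempty S L e ι g)
      (chainC_isClosed S L e ι hLcomp g 0).isCompact (chainC_isClosed S L e ι hLcomp g)
  set σ : LatticeCompletion S → LatticeCompletion S := fun g => (hinter g).some with hσ_def
  have hσ_mem : ∀ g n, σ g ∈ chainC S L e ι g n := fun g n =>
    Set.mem_iInter.mp (hinter g).some_mem n
  -- the three properties of σ
  have hσ_inv : ∀ ℓ ∈ LhatIn L S, ∀ g, σ (ℓ * g) = σ g := by
    intro ℓ hℓ g
    refine chainC_unique S L e ι he hι g _ _ (fun n => ?_) (hσ_mem g)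
    have := hσ_mem (ℓ * g) n
    rwa [chainC_translate S L e ι g hℓ n] at this
  have hσ_sec : ∀ g, ∃ ℓ ∈ LhatIn L S, g = ℓ * σ g := by
    intro g
    obtain ⟨ℓ, hℓ, hℓg⟩ := (mem_chainC_zero S L e ι).mp (hσ_mem g 0)
    refine ⟨ℓ⁻¹, inv_mem hℓ, ?_⟩
    rw [← hℓg, inv_mul_cancel_left]
  have hσ_cont : Continuous σ := by
    apply continuous_induced_rng.mpr
    apply continuous_pi
    intro H
    apply IsLocallyConstant.continuous
    rw [IsLocallyConstant.iff_exists_open]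
    intro g
    obtain ⟨n, rfl⟩ := he H
    refine ⟨{g' : LatticeCompletion S | ∀ i < n + 1, g'.1 (e i) = g.1 (e i)}, ?_, ?_, ?_⟩
    · have heq : {g' : LatticeCompletion S | ∀ i < n + 1, g'.1 (e i) = g.1 (e i)}
          = ⋂ i ∈ Finset.range (n + 1),
            ((fun x : LatticeCompletion S => x.1 (e i)) ⁻¹' {g.1 (e i)}) := by
        ext x
        simp [Finset.mem_range]
      rw [heq]
      exact isOpen_biInter_finset fun i _ =>
        (isOpen_discrete _).preimage ((continuous_apply (e i)).comp continuous_subtype_val)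
    · intro i _
      rfl
    · intro g' hg'
      have h1 := ((mem_chainC_succ S L e ι).mp (hσ_mem g' (n + 1))).2
      have h2 := ((mem_chainC_succ S L e ι).mp (hσ_mem g (n + 1))).2
      have himg := chainC_image_congr S L e ι n g' g hg'
      apply hι (e n)
      show coordF S e ι n (σ g') = coordF S e ι n (σ g)
      rw [h1, h2, himg]
  refine ⟨σ, hσ_cont, hσ_inv, hσ_sec, ?_⟩
  -- Part 4: every graphing downstairs comes from a graphing upstairs
  intro S' hS'
  obtain ⟨hS'meas, hS'sub, hS'conn⟩ := hS'
  set φ : L →* LatticeCompletion S := (completionHom S).comp L.subtype with hφ_def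
  obtain ⟨ℓt, hℓt, hℓt1⟩ := hσ_sec 1
  set t : LatticeCompletion S := σ 1 with ht_def
  have ht_mem : t ∈ LhatIn L S := by
    have htinv : t = ℓt⁻¹ := eq_inv_of_mul_eq_one_right hℓt1.symm
    rw [htinv]
    exact inv_mem hℓt
  -- measurability setup
  haveI : ∀ H : S, Countable (NQuot (H : Subgroup Γ)) := fun H => @Finite.to_countable _ (hfinQ H)
  haveI : SecondCountableTopology (Π H : S, NQuot (H : Subgroup Γ)) := inferInstance
  haveI : SecondCountableTopology (LatticeCompletion S) :=
    inferInstanceAs (SecondCountableTopology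
      ↥((LatticeCompletion S : Set (Π H : S, NQuot (H : Subgroup Γ)))))
  have hmeasL : MeasurableSet (LhatIn L S : Set (LatticeCompletion S)) :=
    hLclosed.measurableSet
  have hval : MeasurableEmbedding (Subtype.val : (LhatIn L S) → LatticeCompletion S) :=
    MeasurableEmbedding.subtype_coe hmeasL
  have hval2 : MeasurableEmbedding
      (fun p : (LhatIn L S) × (LhatIn L S) => ((p.1 : LatticeCompletion S), (p.2 : LatticeCompletion S))) :=
    hval.prodMap hval
  set S'' : Set (LatticeCompletion S × LatticeCompletion S) :=
    (fun p : (LhatIn L S) × (LhatIn L S) =>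
      ((p.1 : LatticeCompletion S), (p.2 : LatticeCompletion S))) '' S' with hS''_def
  have hS''meas : MeasurableSet S'' := hval2.measurableSet_image.mpr hS'meas
  set ρ : LatticeCompletion S × LatticeCompletion S → LatticeCompletion S × LatticeCompletion S :=
    fun q => (q.1 * t⁻¹, q.2 * t⁻¹) with hρ_def
  have hρcont : Continuous ρ :=
    (continuous_fst.mul continuous_const).prodMk (continuous_snd.mul continuous_const)
  set T₁ : Set (LatticeCompletion S × LatticeCompletion S) := ρ ⁻¹' S'' with hT₁_def
  have hT₁meas : MeasurableSet T₁ := hρcont.measurable hS''meas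
  set rel : Set (LatticeCompletion S × LatticeCompletion S) :=
    leftOrbitRel (Set.range φ) with hrel_def
  have hrel_eq : rel = ⋃ l : L,
      {q : LatticeCompletion S × LatticeCompletion S | q.2 = φ l * q.1} := by
    ext q
    simp only [hrel_def, leftOrbitRel, Set.mem_setOf_eq, Set.mem_iUnion, Set.mem_range]
    constructor
    · rintro ⟨_, ⟨l, rfl⟩, hq⟩
      exact ⟨l, hq⟩
    · rintro ⟨l, hq⟩
      exact ⟨φ l, ⟨l, rfl⟩, hq⟩
  have hrel_meas : MeasurableSet rel := by
    rw [hrel_eq]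
    refine MeasurableSet.iUnion fun l => ?_
    have hcl : IsClosed {q : LatticeCompletion S × LatticeCompletion S | q.2 = φ l * q.1} := by
      have heq2 : {q : LatticeCompletion S × LatticeCompletion S | q.2 = φ l * q.1}
          = (fun q : LatticeCompletion S × LatticeCompletion S
              => q.2 * (φ l * q.1)⁻¹) ⁻¹' {1} := by
        ext q
        simp only [Set.mem_setOf_eq, Set.mem_preimage, Set.mem_singleton_iff, mul_inv_eq_one]
      rw [heq2]
      exact IsClosed.preimage
        (continuous_snd.mul ((continuous_const.mul continuous_fst).inv)) isClosed_singleton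
    exact hcl.measurableSet
  set T₂ : Set (LatticeCompletion S × LatticeCompletion S) :=
    rel ∩ ((LhatIn L S : Set (LatticeCompletion S)) ×ˢ (LhatIn L S : Set (LatticeCompletion S)))ᶜ
    with hT₂_def
  have hT₂meas : MeasurableSet T₂ := hrel_meas.inter (hmeasL.prod hmeasL).compl
  refine ⟨T₁ ∪ T₂, ⟨hT₁meas.union hT₂meas, ?_, ?_⟩, t, ⟨1, ht_def.symm⟩, ?_⟩
  · -- T₁ ∪ T₂ ⊆ leftOrbitRel (range φ)
    apply Set.union_subset
    · rintro ⟨a, b⟩ hab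
      obtain ⟨⟨x, y⟩, hxy, hmap⟩ := hab
      obtain ⟨_, ⟨l₀, rfl⟩, hyx⟩ := hS'sub hxy
      have hx : (x : LatticeCompletion S) = a * t⁻¹ := by
        simpa [hρ_def] using congrArg Prod.fst hmap
      have hy : (y : LatticeCompletion S) = b * t⁻¹ := by
        simpa [hρ_def] using congrArg Prod.snd hmap
      have hyx' : (y : LatticeCompletion S) = φ l₀ * (x : LatticeCompletion S) :=
        congrArg Subtype.val hyx
      refine ⟨φ l₀, ⟨l₀, rfl⟩, ?_⟩
      have : b * t⁻¹ = (φ l₀ * a) * t⁻¹ := by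
        rw [← hy, hyx', hx, mul_assoc]
      exact mul_right_cancel this
    · exact Set.inter_subset_left
  · -- connectivity
    rintro ⟨a, b⟩ hab
    obtain ⟨_, ⟨l₀, rfl⟩, hba0⟩ := hab
    have hba : b = φ l₀ * a := hba0
    by_cases hcase : a ∈ LhatIn L S ∧ b ∈ LhatIn L S
    · obtain ⟨h1, h2⟩ := hcase
      set x : (LhatIn L S) := ⟨a * t⁻¹, mul_mem h1 (inv_mem ht_mem)⟩ with hx_def
      set y : (LhatIn L S) := ⟨b * t⁻¹, mul_mem h2 (inv_mem ht_mem)⟩ with hy_def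
      have hxy : (x, y) ∈ leftOrbitRel (Set.range (toLhatIn L S)) := by
        refine ⟨toLhatIn L S l₀, ⟨l₀, rfl⟩, ?_⟩
        apply Subtype.ext
        show b * t⁻¹ = φ l₀ * (a * t⁻¹)
        rw [hba, mul_assoc]
      have hpath := hS'conn (x, y) hxy
      have hstep : ∀ u v : (LhatIn L S), ((u, v) ∈ S' ∨ (v, u) ∈ S') →
          (((u : LatticeCompletion S) * t, (v : LatticeCompletion S) * t) ∈ T₁ ∪ T₂ ∨
           ((v : LatticeCompletion S) * t, (u : LatticeCompletion S) * t) ∈ T₁ ∪ T₂) := by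
        intro u v huv
        rcases huv with h | h
        · left; left
          show ρ ((u : LatticeCompletion S) * t, (v : LatticeCompletion S) * t) ∈ S''
          have : ρ ((u : LatticeCompletion S) * t, (v : LatticeCompletion S) * t)
              = ((u : LatticeCompletion S), (v : LatticeCompletion S)) := by
            simp [hρ_def, mul_inv_cancel_right]
          rw [this]
          exact ⟨(u, v), h, rfl⟩
        · right; left
          show ρ ((v : LatticeCompletion S) * t, (u : LatticeCompletion S) * t) ∈ S''
          have : ρ ((v : LatticeCompletion S) * t, (u : LatticeCompletion S) * t)
              = ((v : LatticeCompletion S), (u : LatticeCompletion S)) := by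
            simp [hρ_def, mul_inv_cancel_right]
          rw [this]
          exact ⟨(v, u), h, rfl⟩
      have hlift := Relation.ReflTransGen.lift
        (p := fun a b : LatticeCompletion S => (a, b) ∈ T₁ ∪ T₂ ∨ (b, a) ∈ T₁ ∪ T₂)
        (fun z : (LhatIn L S) => (z : LatticeCompletion S) * t)
        (fun u v huv => hstep u v huv) _ _ hpath
      have e1 : (x : LatticeCompletion S) * t = a := inv_mul_cancel_right a t
      have e2 : (y : LatticeCompletion S) * t = b := inv_mul_cancel_right b t
      show Relation.ReflTransGen
        (fun a b => (a, b) ∈ T₁ ∪ T₂ ∨ (b, a) ∈ T₁ ∪ T₂) a b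
      rw [← e1, ← e2]
      exact hlift
    · apply Relation.ReflTransGen.single
      left
      right
      refine ⟨⟨φ l₀, ⟨l₀, rfl⟩, hba⟩, ?_⟩
      intro hmem
      exact hcase ⟨hmem.1, hmem.2⟩
  · -- S' = restrictGraph L S (T₁ ∪ T₂) t
    ext ⟨x, y⟩
    simp only [restrictGraph, Set.mem_setOf_eq, Set.mem_union]
    constructor
    · intro h
      left
      show ρ ((x : LatticeCompletion S) * t, (y : LatticeCompletion S) * t) ∈ S''
      have : ρ ((x : LatticeCompletion S) * t, (y : LatticeCompletion S) * t)
          = ((x : LatticeCompletion S), (y : LatticeCompletion S)) := by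
        simp [hρ_def, mul_inv_cancel_right]
      rw [this]
      exact ⟨(x, y), h, rfl⟩
    · rintro (h | h)
      · have hmem : ((x : LatticeCompletion S), (y : LatticeCompletion S)) ∈ S'' := by
          have : ρ ((x : LatticeCompletion S) * t, (y : LatticeCompletion S) * t)
              = ((x : LatticeCompletion S), (y : LatticeCompletion S)) := by
            simp [hρ_def, mul_inv_cancel_right]
          rw [← this]
          exact h
        obtain ⟨⟨x', y'⟩, hx'y', heq⟩ := hmem
        have hx : x' = x := Subtype.ext (congrArg Prod.fst heq)
        have hy : y' = y := Subtype.ext (congrArg Prod.snd heq)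
        rw [← hx, ← hy]
        exact hx'y'
      · exact absurd ⟨mul_mem x.2 ht_mem, mul_mem y.2 ht_mem⟩ h.2
end
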